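/- Let V ⊂ ℤ^d be finite with 0 ∈ V and let σ : V → ℕ be an active configuration. Then for every realization of the instruction stacks, ACh(σ, V) ≤ J_0(m_S) − J_0(m_{W,0}), where m_S is the strong stabilizing odometer of σ on V with respect to the origin, m_{W,0} is the odometer of the initial weak stabilization of σ on V with respect to the origin, ACh := max(Ch − 1, 0) is the number of additional jump-out iterations, and for an odometer m, J_0(m) counts the pairs (x, ℓ) with x ~ 0 and ℓ < m(x) such that instruction I_x(ℓ) is a jump to 0. -/

import Mathlib

/-!
Site-wise (Diaconis–Fulton) representation of Activated Random Walk,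
following Rolla's survey and the paper
"The critical density of activated random walk is mean field in high dimension".
-/

open MeasureTheory ProbabilityTheory Filter
open scoped ENNReal

namespace ARW

/-- An instruction on a stack: either a sleep instruction, or a jump instruction
labelled by a jump direction `l : L`. -/
inductive Instr (L : Type) : Type
  | sleep : Instr L
  | jump (l : L) : Instr L
  deriving DecidableEq

instance (L : Type) : MeasurableSpace (Instr L) := ⊤

/-- The state of a single site: `num n` means `n` active particles (and no sleeping
particle), `sleepy` means a single sleeping particle.  This realizes `ℕ ∪ {𝔰}`. -/
inductive SiteState : Type
  | num (n : ℕ) : SiteState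
  | sleepy : SiteState
  deriving DecidableEq

instance : Inhabited SiteState := ⟨.num 0⟩
instance : MeasurableSpace SiteState := ⊤

/-- Total number of particles at a site (`|𝔰| = 1`). -/
def SiteState.count : SiteState → ℕ
  | .num n => n
  | .sleepy => 1

/-- Number of *active* particles at a site. -/
def SiteState.numActive : SiteState → ℕ
  | .num n => n
  | .sleepy => 0

/-- Add one active particle to a site, waking a sleeping particle if present. -/
def SiteState.addActive : SiteState → SiteState
  | .num n => .num (n + 1)
  | .sleepy => .num 2

variable {X L : Type}

/-- Instruction stacks: an instruction for every site and stack position. -/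
abbrev Stacks (X L : Type) := X → ℕ → Instr L

/-- A particle configuration `X → ℕ ∪ {𝔰}`. -/
abbrev Config (X : Type) := X → SiteState

/-- A state of the system: a configuration together with an odometer. -/
abbrev ARWState (X : Type) := Config X × (X → ℕ)

/-- The all-active configuration associated to `σ : X → ℕ`. -/
def activeConfig (σ : X → ℕ) : Config X := fun x => .num (σ x)

/-- Topple site `x` (in `V`, with particles jumping out of `V` killed):
apply the next unused instruction of the stack at `x` and increment the odometer there.
A sleep instruction puts a lone (possibly just woken) particle to sleep and has no
effect when two or more particles are present; a jump instruction moves one particle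
(waking it first if it was sleeping) to the target site, waking any sleeping particle
there. -/
def toppleAt [DecidableEq X] (tgt : X → L → X) (V : Finset X) (I : Stacks X L)
    (x : X) (s : ARWState X) : ARWState X :=
  let σ := s.1
  let σ₁ : Config X :=
    match I x (s.2 x) with
    | .sleep => if σ x = .num 1 then Function.update σ x .sleepy else σ
    | .jump l =>
        let y := tgt x l
        let σ' := Function.update σ x (.num ((σ x).count - 1))
        if y ∈ V then Function.update σ' y ((σ' y).addActive) else σ'
  (σ₁, Function.update s.2 x (s.2 x + 1))

/-- Eligibility predicate for ordinary toppling: the site is unstable,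
i.e. holds at least one active particle. -/
def unstableElig : X → SiteState → Prop := fun _ st => 1 ≤ st.numActive

/-- Eligibility predicate for weak toppling with respect to `U`: sites of `U` are
weakly unstable when they hold at least two active particles; other sites are
weakly unstable iff unstable. -/
def weakElig [DecidableEq X] (U : Finset X) : X → SiteState → Prop :=
  fun x st => if x ∈ U then 2 ≤ st.numActive else 1 ≤ st.numActive

/-- Eligibility predicate for acceptable toppling: the site is nonempty. -/
def accElig : X → SiteState → Prop := fun _ st => 1 ≤ st.count

/-- One toppling step at some site of `V` that is eligible according to `elig`. -/
def ToppleStep [DecidableEq X] (tgt : X → L → X) (V : Finset X) (I : Stacks X L)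
    (elig : X → SiteState → Prop) (s t : ARWState X) : Prop :=
  ∃ x ∈ V, elig x (s.1 x) ∧ t = toppleAt tgt V I x s

/-- Reachability by finitely many topplings of `elig`-eligible sites of `V`. -/
abbrev Reach [DecidableEq X] (tgt : X → L → X) (V : Finset X) (I : Stacks X L)
    (elig : X → SiteState → Prop) : ARWState X → ARWState X → Prop :=
  Relation.ReflTransGen (ToppleStep tgt V I elig)

/-- A configuration is stable in `V` if no site of `V` holds an active particle. -/
def IsStable (V : Finset X) (σ : Config X) : Prop := ∀ x ∈ V, (σ x).numActive = 0

/-- A configuration is weakly stable in `V` w.r.t. `U` if no site of `V` is weakly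
unstable (sites of `U` may hold a single active particle). -/
def IsWeaklyStable [DecidableEq X] (V U : Finset X) (σ : Config X) : Prop :=
  ∀ x ∈ V, ¬ weakElig U x (σ x)

/-- The stabilization of the state `s` in `V`: the state reached from `s` by
toppling unstable sites of `V` until none remain.  (By the abelian property this
state is unique whenever it exists; `Classical.epsilon` selects it.)
Its first component is `Stab_V`, its second component is the odometer `Odom_V`. -/
noncomputable def stabState [DecidableEq X] (tgt : X → L → X) (V : Finset X)
    (I : Stacks X L) (s : ARWState X) : ARWState X :=
  Classical.epsilon fun t => Reach tgt V I unstableElig s t ∧ IsStable V t.1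

/-- The weak stabilization of the state `s` in `V` with respect to `U`. -/
noncomputable def weakStabState [DecidableEq X] (tgt : X → L → X) (V U : Finset X)
    (I : Stacks X L) (s : ARWState X) : ARWState X :=
  Classical.epsilon fun t => Reach tgt V I (weakElig U) s t ∧ IsWeaklyStable V U t.1

/-- The instruction stacks `I` admit weak stabilization on `V` w.r.t. `U` from every
state (this holds almost surely). -/
def WeakStabilizable [DecidableEq X] (tgt : X → L → X) (V U : Finset X)
    (I : Stacks X L) : Prop :=
  ∀ s : ARWState X, ∃ t, Reach tgt V I (weakElig U) s t ∧ IsWeaklyStable V U t.1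

/-- The jump-out step at the origin `o`: acceptably topple the particle at `o`
(using the sleep instructions encountered, which put it to sleep and wake it again)
until it jumps out of `o`. -/
noncomputable def jumpOut [DecidableEq X] (tgt : X → L → X) (o : X) (V : Finset X)
    (I : Stacks X L) (s : ARWState X) : ARWState X :=
  let ℓ := sInf {k | s.2 o ≤ k ∧ I o k ≠ Instr.sleep}
  toppleAt tgt V I o (s.1, Function.update s.2 o ℓ)

/-- The strong stabilization procedure started from `s0`: first weakly stabilize
w.r.t. `o` (the pre-step, index `0`), then repeatedly jump the particle out of the
origin and weakly stabilize again, stopping when the origin is empty. -/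
noncomputable def strongSeq [DecidableEq X] (tgt : X → L → X) (o : X) (V : Finset X)
    (I : Stacks X L) (s0 : ARWState X) : ℕ → ARWState X
  | 0 => weakStabState tgt V {o} I s0
  | k + 1 =>
      if ((strongSeq tgt o V I s0 k).1 o).count = 0 then strongSeq tgt o V I s0 k
      else weakStabState tgt V {o} I (jumpOut tgt o V I (strongSeq tgt o V I s0 k))

/-- `Ch`: the number of completed jump-out iterations in the strong stabilization
of the configuration `σ0` on `V` with respect to the origin `o`. -/
noncomputable def Ch [DecidableEq X] (tgt : X → L → X) (o : X) (V : Finset X)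
    (I : Stacks X L) (σ0 : Config X) : ℕ :=
  sInf {k | ((strongSeq tgt o V I (σ0, fun _ => 0) k).1 o).count = 0}

/-- `ACh = max (Ch - 1) 0`: the number of additional chances. -/
noncomputable def ACh [DecidableEq X] (tgt : X → L → X) (o : X) (V : Finset X)
    (I : Stacks X L) (σ0 : Config X) : ℕ :=
  Ch tgt o V I σ0 - 1

/-- The strong stabilizing odometer: the odometer at the end of the strong
stabilization procedure. -/
noncomputable def strongOdom [DecidableEq X] (tgt : X → L → X) (o : X) (V : Finset X)
    (I : Stacks X L) (σ0 : Config X) : X → ℕ :=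
  (strongSeq tgt o V I (σ0, fun _ => 0) (Ch tgt o V I σ0)).2

/-- The odometer of the initial weak stabilization (pre-step). -/
noncomputable def weakOdom0 [DecidableEq X] (tgt : X → L → X) (o : X) (V : Finset X)
    (I : Stacks X L) (σ0 : Config X) : X → ℕ :=
  (strongSeq tgt o V I (σ0, fun _ => 0) 0).2

/-- The number of closed walks of length `n` from `o` to `o` in the graph whose steps
are given by `tgt`. -/
noncomputable def closedWalkCount (tgt : X → L → X) (o : X) (n : ℕ) : ℕ :=
  Nat.card {f : Fin n → L // (List.ofFn f).foldl tgt o = o}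

/-- The expected number of returns to `o` of the simple random walk (uniform steps
in `L`): `E[R] = ∑_{n ≥ 1} P(S_n = o)`, valued in `ℝ≥0∞`. -/
noncomputable def expReturns [Fintype L] (tgt : X → L → X) (o : X) : ℝ≥0∞ :=
  ∑' n : ℕ, (closedWalkCount tgt o (n + 1) : ℝ≥0∞) / (Fintype.card L : ℝ≥0∞) ^ (n + 1)

/-- `I` is a family of i.i.d. ARW instruction stacks with sleep rate `lam` on the
probability space `(Ω, P)`: the entries are jointly independent, each entry is a
sleep instruction with probability `p_𝔰 = lam/(1+lam)` and any given jump instruction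
with probability `p_j/deg` where `p_j = 1 - p_𝔰` and `deg = |L|`. -/
structure IsARWStacks [Fintype L] (lam : ℝ) {Ω : Type} [MeasurableSpace Ω]
    (P : Measure Ω) (I : Ω → Stacks X L) : Prop where
  meas : ∀ x k, Measurable fun ω => I ω x k
  indep : iIndepFun (fun (p : X × ℕ) ω => I ω p.1 p.2) P
  sleep_prob : ∀ x k, P {ω | I ω x k = Instr.sleep} = ENNReal.ofReal (lam / (1 + lam))
  jump_prob : ∀ x k l, P {ω | I ω x k = Instr.jump l}
      = ENNReal.ofReal ((1 - lam / (1 + lam)) / (Fintype.card L : ℝ))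

/-- The full odometer `m_σ(x)` of the system on the whole (infinite) graph: the
supremum over finite `V` of the stabilizing odometers (these are nondecreasing
in `V`). -/
noncomputable def mOdomGen [DecidableEq X] (tgt : X → L → X) (I : Stacks X L)
    (σ0 : Config X) (x : X) : ℕ∞ :=
  ⨆ V : Finset X, ((stabState tgt V I (σ0, fun _ => 0)).2 x : ℕ∞)

/-! ### The lattice `ℤ^d` -/

/-- Sites of `ℤ^d`. -/
abbrev SiteZ (d : ℕ) := Fin d → ℤ

/-- Jump directions in `ℤ^d`: a coordinate and a sign (`2d` of them). -/
abbrev Dir (d : ℕ) := Fin d × Bool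

/-- The unit step in direction `p`. -/
def stepDir (d : ℕ) (p : Dir d) : SiteZ d :=
  Pi.single p.1 (if p.2 then (1 : ℤ) else -1)

/-- Nearest-neighbour jumps on `ℤ^d`. -/
def tgtZ (d : ℕ) : SiteZ d → Dir d → SiteZ d := fun x p => x + stepDir d p

/-- The origin of `ℤ^d`. -/
def originZ (d : ℕ) : SiteZ d := 0

/-- The box `V_n = {-n, …, n}^d`. -/
noncomputable def BoxZ (d : ℕ) (n : ℕ) : Finset (SiteZ d) :=
  Finset.Icc (fun _ => -(n : ℤ)) (fun _ => (n : ℤ))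

/-- The ball `B₁`: the origin together with its `2d` neighbours. -/
def ballOneZ (d : ℕ) : Finset (SiteZ d) :=
  insert (originZ d) (Finset.univ.image (stepDir d))

/-- `Stab_V σ` on `ℤ^d` (started from the zero odometer). -/
noncomputable def StabZ (d : ℕ) (V : Finset (SiteZ d)) (I : Stacks (SiteZ d) (Dir d))
    (σ0 : Config (SiteZ d)) : Config (SiteZ d) :=
  (stabState (tgtZ d) V I (σ0, fun _ => 0)).1

/-- `Ch(σ, V)` on `ℤ^d`, w.r.t. the origin. -/
noncomputable def ChZ (d : ℕ) (V : Finset (SiteZ d)) (I : Stacks (SiteZ d) (Dir d))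
    (σ0 : Config (SiteZ d)) : ℕ :=
  Ch (tgtZ d) (originZ d) V I σ0

/-- `ACh(σ, V) = max(Ch - 1, 0)` on `ℤ^d`. -/
noncomputable def AChZ (d : ℕ) (V : Finset (SiteZ d)) (I : Stacks (SiteZ d) (Dir d))
    (σ0 : Config (SiteZ d)) : ℕ :=
  ACh (tgtZ d) (originZ d) V I σ0

/-- Strong stabilizing odometer on `ℤ^d`. -/
noncomputable def strongOdomZ (d : ℕ) (V : Finset (SiteZ d))
    (I : Stacks (SiteZ d) (Dir d)) (σ0 : Config (SiteZ d)) : SiteZ d → ℕ :=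
  strongOdom (tgtZ d) (originZ d) V I σ0

/-- Odometer of the initial weak stabilization on `ℤ^d`. -/
noncomputable def weakOdom0Z (d : ℕ) (V : Finset (SiteZ d))
    (I : Stacks (SiteZ d) (Dir d)) (σ0 : Config (SiteZ d)) : SiteZ d → ℕ :=
  weakOdom0 (tgtZ d) (originZ d) V I σ0

/-- `J₀(m)`: the number of pairs `(x, ℓ)` with `x ∼ 0`, `ℓ < m x`, such that the
instruction `I x ℓ` is a jump to the origin. -/
noncomputable def J0Z (d : ℕ) (I : Stacks (SiteZ d) (Dir d)) (m : SiteZ d → ℕ) : ℕ :=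
  ∑ p : Dir d,
    ((Finset.range (m (stepDir d p))).filter
      fun ℓ => I (stepDir d p) ℓ = Instr.jump (p.1, !p.2)).card

/-- The full odometer `m_σ` on `ℤ^d`, as the nondecreasing limit of the stabilizing
odometers over the boxes `V_n`. -/
noncomputable def mOdomZ (d : ℕ) (I : Stacks (SiteZ d) (Dir d)) (σ0 : Config (SiteZ d))
    (x : SiteZ d) : ℕ∞ :=
  ⨆ n : ℕ, ((stabState (tgtZ d) (BoxZ d n) I (σ0, fun _ => 0)).2 x : ℕ∞)

/-- The limiting stable configuration `Stab σ = lim_{V ↗ ℤ^d} Stab_V σ` (the eventual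
value of `Stab_{V_n} σ` at `x` along the boxes; it exists a.s. on the fixation event). -/
noncomputable def stabLimitZ (d : ℕ) (I : Stacks (SiteZ d) (Dir d))
    (σ0 : Config (SiteZ d)) (x : SiteZ d) : SiteState :=
  Classical.epsilon fun st =>
    ∀ᶠ n in atTop, (stabState (tgtZ d) (BoxZ d n) I (σ0, fun _ => 0)).1 x = st

/-- Translation of configurations of `ℤ^d` by `v`. -/
def shiftZ (d : ℕ) {α : Type} (v : SiteZ d) (σ : SiteZ d → α) : SiteZ d → α :=
  fun x => σ (x + v)

/-- A measure on configurations of `ℤ^d` is translation-ergodic if it is invariant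
under all translations and every translation-invariant measurable set is trivial. -/
structure IsTransErgodicZ (d : ℕ) {α : Type} [MeasurableSpace α]
    (μ : Measure (SiteZ d → α)) : Prop where
  invariant : ∀ v : SiteZ d, μ.map (shiftZ d v) = μ
  ergodic : ∀ A : Set (SiteZ d → α), MeasurableSet A →
    (∀ v : SiteZ d, shiftZ d v ⁻¹' A = A) → μ A = 0 ∨ μ A = 1

/-- `ASFixates d lam ρ`: every ARW system on `ℤ^d` with sleep rate `lam` started from
a translation-ergodic active configuration with mean `ρ`, independent of the
instruction stacks, almost surely fixates (in the sense that every site has a finite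
odometer, which by Rolla–Tournier is equivalent to particle fixation). -/
def ASFixates (d : ℕ) (lam ρ : ℝ) : Prop :=
  ∀ (Ω : Type) (_ : MeasurableSpace Ω) (P : Measure Ω), IsProbabilityMeasure P →
    ∀ (I : Ω → Stacks (SiteZ d) (Dir d)) (η : Ω → SiteZ d → ℕ),
      IsARWStacks lam P I → Measurable η → IndepFun η I P →
      IsTransErgodicZ d (P.map η) →
      (∫⁻ ω, (η ω (originZ d) : ℝ≥0∞) ∂P) = ENNReal.ofReal ρ →
      P {ω | ∀ x, mOdomZ d (I ω) (activeConfig (η ω)) x < ⊤} = 1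

/-- The critical density `ρ_c(ℤ^d, λ)` of activated random walk on `ℤ^d`. -/
noncomputable def criticalDensity (d : ℕ) (lam : ℝ) : ℝ :=
  sSup {ρ : ℝ | 0 ≤ ρ ∧ ASFixates d lam ρ}

/-- `E[R(ℤ^d)]`: expected returns to the origin of simple random walk on `ℤ^d`. -/
noncomputable def expReturnsZ (d : ℕ) : ℝ≥0∞ :=
  expReturns (tgtZ d) (originZ d)

end ARW

namespace ARW

lemma count_addActive (st : SiteState) : st.addActive.count = st.count + 1 := by
  cases st <;> rfl

lemma count_le_one_of_not_two_le {st : SiteState} (h : ¬ 2 ≤ st.numActive) :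
    st.count ≤ 1 := by
  cases st with
  | num n => simp [SiteState.numActive] at h; simpa [SiteState.count] using by omega
  | sleepy => simp [SiteState.count]

lemma stepDir_ne_origin (d : ℕ) (p : Dir d) : stepDir d p ≠ originZ d := by
  intro h
  have h1 := congrFun h p.1
  simp [stepDir, originZ, Pi.single_eq_same] at h1
  split at h1 <;> omega

lemma tgtZ_origin (d : ℕ) (l : Dir d) : tgtZ d (originZ d) l = stepDir d l := by
  simp [tgtZ, originZ]

lemma neg_stepDir (d : ℕ) (l : Dir d) : -(stepDir d l) = stepDir d (l.1, !l.2) := by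
  cases hb : l.2 <;> simp [stepDir, hb, ← Pi.single_neg]

lemma eq_stepDir_of_tgt_eq_origin {d : ℕ} {x : SiteZ d} {l : Dir d}
    (h : tgtZ d x l = originZ d) : x = stepDir d (l.1, !l.2) := by
  have hx : x = -(stepDir d l) := by
    have : x + stepDir d l = 0 := h
    linear_combination this
  rw [hx, neg_stepDir]

lemma J0Z_mono {d : ℕ} (I : Stacks (SiteZ d) (Dir d)) {m m' : SiteZ d → ℕ}
    (h : ∀ z, m z ≤ m' z) : J0Z d I m ≤ J0Z d I m' := by
  refine Finset.sum_le_sum fun p _ => Finset.card_le_card ?_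
  exact Finset.filter_subset_filter _ (Finset.range_subset_range.2 (h _))

lemma J0Z_add_one_le {d : ℕ} (I : Stacks (SiteZ d) (Dir d)) {m m' : SiteZ d → ℕ}
    (p₀ : Dir d) (hmono : ∀ z, m z ≤ m' z)
    (hI : I (stepDir d p₀) (m (stepDir d p₀)) = Instr.jump (p₀.1, !p₀.2))
    (hlt : m (stepDir d p₀) < m' (stepDir d p₀)) :
    J0Z d I m + 1 ≤ J0Z d I m' := by
  have : J0Z d I m < J0Z d I m' := by
    refine Finset.sum_lt_sum
      (fun p _ => Finset.card_le_card
        (Finset.filter_subset_filter _ (Finset.range_subset_range.2 (hmono _))))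
      ⟨p₀, Finset.mem_univ _, Finset.card_lt_card ?_⟩
    refine (Finset.ssubset_iff_of_subset
      (Finset.filter_subset_filter _ (Finset.range_subset_range.2 (hmono _)))).2 ?_
    exact ⟨m (stepDir d p₀), by simp [Finset.mem_filter, Finset.mem_range, hlt, hI],
      by simp [Finset.mem_filter, Finset.mem_range]⟩
  omega

lemma J0Z_update_origin {d : ℕ} (I : Stacks (SiteZ d) (Dir d)) (m : SiteZ d → ℕ)
    (v : ℕ) : J0Z d I (Function.update m (originZ d) v) = J0Z d I m := by
  unfold J0Z
  refine Finset.sum_congr rfl fun p _ => ?_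
  rw [Function.update_of_ne (stepDir_ne_origin d p)]

/-- Key single-step estimate: along a weak-toppling step, the particle count at the
origin increases at most by the number of newly used jump-to-origin instructions
at the neighbours of the origin. -/
lemma step_key {d : ℕ} {V : Finset (SiteZ d)} {I : Stacks (SiteZ d) (Dir d)}
    {s t : ARWState (SiteZ d)}
    (h : ToppleStep (tgtZ d) V I (weakElig {originZ d}) s t) :
    (t.1 (originZ d)).count + J0Z d I s.2
      ≤ (s.1 (originZ d)).count + J0Z d I t.2 := by
  obtain ⟨x, hxV, helig, rfl⟩ := h
  have hodom : (toppleAt (tgtZ d) V I x s).2 = Function.update s.2 x (s.2 x + 1) := rfl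
  have hmono : ∀ z, s.2 z ≤ Function.update s.2 x (s.2 x + 1) z := by
    intro z
    rcases eq_or_ne z x with rfl | hz
    · simp
    · rw [Function.update_of_ne hz]
  have hJ : J0Z d I s.2 ≤ J0Z d I (toppleAt (tgtZ d) V I x s).2 := by
    rw [hodom]; exact J0Z_mono I hmono
  rcases hIx : I x (s.2 x) with _ | l
  · -- sleep instruction: count at origin unchanged
    have hcfg : (toppleAt (tgtZ d) V I x s).1
        = if s.1 x = .num 1 then Function.update s.1 x .sleepy else s.1 := by
      simp [toppleAt, hIx]
    have hcount : ((toppleAt (tgtZ d) V I x s).1 (originZ d)).count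
        = (s.1 (originZ d)).count := by
      rw [hcfg]
      split_ifs with h1
      · rcases eq_or_ne x (originZ d) with rfl | hx
        · rw [Function.update_self, h1]; rfl
        · rw [Function.update_of_ne (Ne.symm hx)]
      · rfl
    omega
  · -- jump instruction
    have hcfg : (toppleAt (tgtZ d) V I x s).1
        = (let y := tgtZ d x l
           let σ' := Function.update s.1 x (.num ((s.1 x).count - 1))
           if y ∈ V then Function.update σ' y ((σ' y).addActive) else σ') := by
      simp [toppleAt, hIx]
    rcases eq_or_ne x (originZ d) with rfl | hx
    · -- toppling at the origin: count at origin does not increase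
      have hy : tgtZ d (originZ d) l ≠ originZ d := by
        rw [tgtZ_origin]; exact stepDir_ne_origin d l
      have hcount : ((toppleAt (tgtZ d) V I (originZ d) s).1 (originZ d)).count
          ≤ (s.1 (originZ d)).count := by
        rw [hcfg]
        simp only
        split_ifs with hyV
        · rw [Function.update_of_ne hy.symm, Function.update_self]
          simp [SiteState.count]
        · rw [Function.update_self]
          simp [SiteState.count]
      omega
    · rcases eq_or_ne (tgtZ d x l) (originZ d) with hy | hy
      · -- jump to the origin: count +1, and a jump-to-origin instruction is used
        have hx' : x = stepDir d (l.1, !l.2) := eq_stepDir_of_tgt_eq_origin hy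
        have hcount : ((toppleAt (tgtZ d) V I x s).1 (originZ d)).count
            ≤ (s.1 (originZ d)).count + 1 := by
          rw [hcfg]
          simp only
          split_ifs with hyV
          · rw [hy, Function.update_self, Function.update_of_ne (Ne.symm hx),
              count_addActive]
          · rw [Function.update_of_ne (Ne.symm hx)]; omega
        have hJ' : J0Z d I s.2 + 1 ≤ J0Z d I (toppleAt (tgtZ d) V I x s).2 := by
          rw [hodom]
          refine J0Z_add_one_le I (l.1, !l.2) hmono ?_ ?_
          · rw [← hx']
            simpa [Bool.not_not] using hIx
          · rw [← hx', Function.update_self]; omega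
        omega
      · -- jump elsewhere: count at origin unchanged
        have hcount : ((toppleAt (tgtZ d) V I x s).1 (originZ d)).count
            = (s.1 (originZ d)).count := by
          rw [hcfg]
          simp only
          split_ifs with hyV
          · rw [Function.update_of_ne hy.symm, Function.update_of_ne (Ne.symm hx)]
          · rw [Function.update_of_ne (Ne.symm hx)]
        omega

lemma reach_key {d : ℕ} {V : Finset (SiteZ d)} {I : Stacks (SiteZ d) (Dir d)}
    {s t : ARWState (SiteZ d)}
    (h : Reach (tgtZ d) V I (weakElig {originZ d}) s t) :
    (t.1 (originZ d)).count + J0Z d I s.2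
      ≤ (s.1 (originZ d)).count + J0Z d I t.2 := by
  induction h with
  | refl => exact le_refl _
  | tail hab hbc ih =>
    have := step_key hbc
    omega

/-- **Equation (4.2) (deterministic).**  For every realization `I` of the instruction
stacks (for which the weak stabilizations occurring in the strong stabilization
procedure are defined and the stack at the origin holds infinitely many jump
instructions), `ACh(σ, V) ≤ J₀(m_S) - J₀(m_{W,0})`, where `m_S` is the strong
stabilizing odometer, `m_{W,0}` is the odometer of the initial weak stabilization,
and `J₀(m)` counts the jump instructions to the origin used under `m` at the
neighbours of the origin. -/
theorem additional_chances_le_jumps_to_origin (d : ℕ) (hd : 1 ≤ d)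
    (I : Stacks (SiteZ d) (Dir d)) (V : Finset (SiteZ d)) (hV : originZ d ∈ V)
    (σ : SiteZ d → ℕ)
    (hws : WeakStabilizable (tgtZ d) V {originZ d} I)
    (hjumps : ∀ k : ℕ, ∃ ℓ, k ≤ ℓ ∧ I (originZ d) ℓ ≠ Instr.sleep) :
    AChZ d V I (activeConfig σ)
      ≤ J0Z d I (strongOdomZ d V I (activeConfig σ))
          - J0Z d I (weakOdom0Z d V I (activeConfig σ)) := by
  classical
  set o : SiteZ d := originZ d with ho
  set s0 : ARWState (SiteZ d) := (activeConfig σ, fun _ => 0) with hs0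
  set S : ℕ → ARWState (SiteZ d) := strongSeq (tgtZ d) o V I s0 with hSdef
  set C : ℕ := Ch (tgtZ d) o V I (activeConfig σ) with hCdef
  have hS0 : S 0 = weakStabState (tgtZ d) V {o} I s0 := rfl
  have hSsucc : ∀ k, S (k + 1) = if ((S k).1 o).count = 0 then S k
      else weakStabState (tgtZ d) V {o} I (jumpOut (tgtZ d) o V I (S k)) :=
    fun k => rfl
  have hCsInf : C = sInf {k | ((S k).1 o).count = 0} := rfl
  -- every `S k` is weakly stable
  have hstable : ∀ k, IsWeaklyStable V {o} ((S k).1) := by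
    intro k
    induction k with
    | zero =>
      have h : Reach (tgtZ d) V I (weakElig {o}) s0 (weakStabState (tgtZ d) V {o} I s0)
          ∧ IsWeaklyStable V {o} (weakStabState (tgtZ d) V {o} I s0).1 :=
        Classical.epsilon_spec (hws s0)
      rw [hS0]; exact h.2
    | succ k ih =>
      by_cases hc : ((S k).1 o).count = 0
      · have : S (k + 1) = S k := by rw [hSsucc k, if_pos hc]
        rw [this]; exact ih
      · set u := jumpOut (tgtZ d) o V I (S k) with hu
        have h : Reach (tgtZ d) V I (weakElig {o}) u (weakStabState (tgtZ d) V {o} I u)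
            ∧ IsWeaklyStable V {o} (weakStabState (tgtZ d) V {o} I u).1 :=
          Classical.epsilon_spec (hws u)
        have hSk : S (k + 1) = weakStabState (tgtZ d) V {o} I u := by
          rw [hSsucc k, if_neg hc]
        rw [hSk]; exact h.2
  have hcount_le : ∀ k, ((S k).1 o).count ≤ 1 := by
    intro k
    have h := hstable k o hV
    simp only [weakElig, Finset.mem_singleton, if_pos rfl] at h
    exact count_le_one_of_not_two_le h
  -- key claim: each continued iteration uses a fresh jump-to-origin instruction
  have claimA : ∀ k, k < C →
      ((S (k + 1)).1 o).count + J0Z d I (S k).2 ≤ J0Z d I (S (k + 1)).2 := by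
    intro k hk
    have hne : ((S k).1 o).count ≠ 0 := by
      have h4 : k < sInf {k | ((S k).1 o).count = 0} := by rw [← hCsInf]; exact hk
      have := Nat.notMem_of_lt_sInf h4
      simpa [Set.mem_setOf_eq] using this
    have hone : ((S k).1 o).count = 1 := le_antisymm (hcount_le k) (by omega)
    set u := jumpOut (tgtZ d) o V I (S k) with hu
    have hSk : S (k + 1) = weakStabState (tgtZ d) V {o} I u := by
      rw [hSsucc k, if_neg hne]
    -- analyze the jump-out step
    set ℓ : ℕ := sInf {j | (S k).2 o ≤ j ∧ I o j ≠ Instr.sleep} with hℓdef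
    have hℓmem : (S k).2 o ≤ ℓ ∧ I o ℓ ≠ Instr.sleep := by
      obtain ⟨j, hj1, hj2⟩ := hjumps ((S k).2 o)
      exact Nat.sInf_mem (⟨j, hj1, hj2⟩ : {j | (S k).2 o ≤ j ∧ I o j ≠ Instr.sleep}.Nonempty)
    obtain ⟨l, hl⟩ : ∃ l, I o ℓ = Instr.jump l := by
      rcases h : I o ℓ with _ | l
      · exact absurd h hℓmem.2
      · exact ⟨l, rfl⟩
    have hu_eq : u = toppleAt (tgtZ d) V I o ((S k).1, Function.update (S k).2 o ℓ) := by
      rw [hu]; rfl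
    have hread : I o ((Function.update (S k).2 o ℓ) o) = Instr.jump l := by
      rw [Function.update_self]; exact hl
    have hyne : tgtZ d o l ≠ o := by
      rw [ho, tgtZ_origin]; exact stepDir_ne_origin d l
    -- origin is empty after the jump-out
    have hucount : (u.1 o).count = 0 := by
      rw [hu_eq]
      have hcfg : (toppleAt (tgtZ d) V I o ((S k).1, Function.update (S k).2 o ℓ)).1
          = (let y := tgtZ d o l
             let σ' := Function.update (S k).1 o (.num (((S k).1 o).count - 1))
             if y ∈ V then Function.update σ' y ((σ' y).addActive) else σ') := by
        simp [toppleAt, Function.update_self, hl]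
      rw [hcfg]
      simp only
      split_ifs with hyV
      · rw [Function.update_of_ne hyne.symm, Function.update_self, hone]
        rfl
      · rw [Function.update_self, hone]; rfl
    -- the jump-out does not change J₀
    have huJ : J0Z d I u.2 = J0Z d I (S k).2 := by
      have h2 : u.2 = Function.update (Function.update (S k).2 o ℓ) o (ℓ + 1) := by
        rw [hu_eq]
        show Function.update (Function.update (S k).2 o ℓ) o
          ((Function.update (S k).2 o ℓ) o + 1) = _
        rw [Function.update_self]
      rw [h2, ho, J0Z_update_origin, J0Z_update_origin]
    have hreach : Reach (tgtZ d) V I (weakElig {o}) u (S (k + 1)) := by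
      rw [hSk]
      exact (Classical.epsilon_spec (hws u) :
        Reach (tgtZ d) V I (weakElig {o}) u (weakStabState (tgtZ d) V {o} I u)
          ∧ IsWeaklyStable V {o} (weakStabState (tgtZ d) V {o} I u).1).1
    have : ((S (k + 1)).1 o).count + J0Z d I u.2
        ≤ (u.1 o).count + J0Z d I (S (k + 1)).2 := reach_key hreach
    omega
  -- iterate the key claim
  have hinv : ∀ k, k + 1 ≤ C → J0Z d I (S 0).2 + k ≤ J0Z d I (S k).2 := by
    intro k
    induction k with
    | zero => intro _; simp
    | succ k ih =>
      intro hk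
      have h1 := ih (by omega)
      have h2 := claimA k (by omega)
      have h3 : ((S (k + 1)).1 o).count ≠ 0 := by
        have h4 : k + 1 < sInf {k | ((S k).1 o).count = 0} := by
          rw [← hCsInf]; omega
        have := Nat.notMem_of_lt_sInf h4
        simpa [Set.mem_setOf_eq] using this
      omega
  -- conclude
  have hfinal : J0Z d I (S 0).2 + (C - 1) ≤ J0Z d I (S C).2 := by
    rcases Nat.eq_zero_or_pos C with hC0 | hC1
    · simp [hC0]
    · have h1 := hinv (C - 1) (by omega)
      have h2 := claimA (C - 1) (by omega)
      have h3 : C - 1 + 1 = C := by omega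
      rw [h3] at h2
      omega
  have hACh : AChZ d V I (activeConfig σ) = C - 1 := rfl
  have hmS : strongOdomZ d V I (activeConfig σ) = (S C).2 := rfl
  have hmW : weakOdom0Z d V I (activeConfig σ) = (S 0).2 := rfl
  rw [hACh, hmS, hmW]
  omega

end ARW
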